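/- Let φ : [a,b] → ℝ be continuous and not identically zero, and for each n ∈ ℕ let φⁿ : [aⁿ,bⁿ] → ℝ be continuous and not identically zero, with aⁿ < bⁿ. If max_{s ∈ [a,b] ∩ [aⁿ,bⁿ]} |φ(s) − φⁿ(s)| → 0, aⁿ → a, and bⁿ → b as n → ∞, then V(φ,[a,b]) ≤ liminf_{n → ∞} V(φⁿ,[aⁿ,bⁿ]). -/

import Mathlib

open Set

/-- The set of integers `k ≥ 1` such that `φ` has `k` sign changes witnessed by
points `s⁰ < s¹ < ⋯ < sᵏ` in `[a,b]` with `φ(sⁱ⁻¹)·φ(sⁱ) < 0`. -/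
def scSet (φ : ℝ → ℝ) (a b : ℝ) : Set ℕ :=
  {k | 1 ≤ k ∧ ∃ s : ℕ → ℝ, (∀ i, i ≤ k → s i ∈ Set.Icc a b) ∧
    (∀ i, i < k → s i < s (i + 1)) ∧
    (∀ i, 1 ≤ i → i ≤ k → φ (s (i - 1)) * φ (s i) < 0)}

open Classical in
/-- The sign-change counting function `sc(φ,[a,b])` with values in `ℕ∞`. -/
noncomputable def sc (φ : ℝ → ℝ) (a b : ℝ) : ℕ∞ :=
  if (∀ s ∈ Set.Icc a b, 0 ≤ φ s) ∨ (∀ s ∈ Set.Icc a b, φ s ≤ 0) then 0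
  else sSup ((fun n : ℕ => (n : ℕ∞)) '' scSet φ a b)

open Classical in
/-- The discrete Lyapunov function `V(φ,[a,b])`: equals `sc(φ,[a,b])` if the latter
is odd or infinite, and `sc(φ,[a,b]) + 1` otherwise. -/
noncomputable def V (φ : ℝ → ℝ) (a b : ℝ) : ℕ∞ :=
  if ∃ n : ℕ, sc φ a b = (n : ℕ∞) ∧ Even n then sc φ a b + 1 else sc φ a b

/-- Membership in the regularity class `H_{[a,b]}` for a `C¹` function `φ` with
derivative `φ'`: boundary nondegeneracy and all zeros simple. -/
def Hmem (φ φ' : ℝ → ℝ) (a b : ℝ) : Prop :=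
  (φ b ≠ 0 ∨ φ a * φ' b < 0) ∧ (φ a ≠ 0 ∨ φ' a * φ b > 0) ∧
  ∀ s ∈ Set.Icc a b, φ s = 0 → φ' s ≠ 0

lemma sign_aux {x y : ℝ} (h : |y - x| < |x|) : 0 < x * y := by
  rcases le_or_gt 0 x with hx | hx
  · have hx' : |x| = x := abs_of_nonneg hx
    have h2 := abs_lt.mp h
    rw [hx'] at h2
    have hy : 0 < y := by linarith [h2.1]
    have hxpos : 0 < x := by
      rcases lt_or_eq_of_le hx with h3 | h3
      · exact h3
      · exfalso; rw [← h3] at h; simp at h; linarith [abs_nonneg y]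
    exact mul_pos hxpos hy
  · have hx' : |x| = -x := abs_of_neg hx
    have h2 := abs_lt.mp h
    rw [hx'] at h2
    have hy : y < 0 := by linarith [h2.2]
    exact mul_pos_of_neg_of_neg hx hy

lemma key_lemma (a b : ℝ) (φ : ℝ → ℝ)
    (hφ_cont : ContinuousOn φ (Set.Icc a b))
    (an bn : ℕ → ℝ) (φn : ℕ → ℝ → ℝ)
    (hab_n : ∀ n, an n < bn n)
    (hφn_cont : ∀ n, ContinuousOn (φn n) (Set.Icc (an n) (bn n)))
    (hconv : Filter.Tendsto
      (fun n => ⨆ s : ↥(Set.Icc a b ∩ Set.Icc (an n) (bn n)), |φ (s : ℝ) - φn n (s : ℝ)|)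
      Filter.atTop (nhds 0))
    (ha : Filter.Tendsto an Filter.atTop (nhds a))
    (hb : Filter.Tendsto bn Filter.atTop (nhds b))
    (k : ℕ) (hk : k ∈ scSet φ a b) :
    ∀ᶠ n in Filter.atTop, (k : ℕ∞) ≤ sc (φn n) (an n) (bn n) := by
  obtain ⟨hk1, s, hmem, hmono, hsign⟩ := hk
  have smono : ∀ j, j ≤ k → ∀ i, i ≤ j → s i ≤ s j := by
    intro j
    induction j with
    | zero => intro _ i hi; rw [Nat.le_zero.mp hi]
    | succ j ih =>
      intro hjk i hi
      by_cases hij : i = j + 1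
      · rw [hij]
      · exact (ih (by omega) i (by omega)).trans (hmono j (by omega)).le
  have sstrict : ∀ i j, i < j → j ≤ k → s i < s j := by
    intro i j hij hjk
    have h1 : s i ≤ s (j - 1) := smono (j - 1) (by omega) i (by omega)
    have h2 : s (j - 1) < s (j - 1 + 1) := hmono (j - 1) (by omega)
    rw [Nat.sub_add_cancel (by omega)] at h2
    exact lt_of_le_of_lt h1 h2
  have hs0 : a ≤ s 0 := (hmem 0 (by omega)).1
  have hsk : s k ≤ b := (hmem k le_rfl).2
  have hs1a : a < s 1 := lt_of_le_of_lt hs0 (hmono 0 hk1)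
  have hskb : s (k - 1) < b := lt_of_lt_of_le (sstrict (k - 1) k (by omega) le_rfl) hsk
  have hab : a < b := lt_of_lt_of_le hs1a ((smono k le_rfl 1 hk1).trans hsk)
  have hne : ∀ i, i ≤ k → φ (s i) ≠ 0 := by
    intro i hik
    rcases Nat.eq_zero_or_pos i with rfl | hi
    · have h1 := hsign 1 le_rfl hk1
      norm_num at h1
      intro h0; rw [h0] at h1; simp at h1
    · have h1 := hsign i hi hik
      intro h0; rw [h0] at h1; simp at h1
  set ε : ℝ := (Finset.range (k + 1)).inf' ⟨0, by simp⟩ (fun i => |φ (s i)|) with hε_def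
  have hε : 0 < ε := by
    rw [hε_def]
    exact Finset.lt_inf'_iff _ |>.mpr fun i hi =>
      abs_pos.mpr (hne i (Finset.mem_range_succ_iff.mp hi))
  have hεle : ∀ i, i ≤ k → ε ≤ |φ (s i)| := fun i hi =>
    Finset.inf'_le _ (Finset.mem_range_succ_iff.mpr hi)
  obtain ⟨δ, hδ, hδ'⟩ := Metric.uniformContinuousOn_iff.mp
    (isCompact_Icc.uniformContinuousOn_of_continuous hφ_cont) (ε / 2) (by positivity)
  have E1 : ∀ᶠ n in Filter.atTop, |an n - a| < δ := by
    have := Metric.tendsto_nhds.mp ha δ hδ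
    simpa [Real.dist_eq] using this
  have E1b : ∀ᶠ n in Filter.atTop, |bn n - b| < δ := by
    have := Metric.tendsto_nhds.mp hb δ hδ
    simpa [Real.dist_eq] using this
  have E2 : ∀ᶠ n in Filter.atTop, an n < s 1 := ha.eventually_lt_const hs1a
  have E3 : ∀ᶠ n in Filter.atTop, s (k - 1) < bn n := hb.eventually_const_lt hskb
  have E4 : ∀ᶠ n in Filter.atTop, a < bn n := hb.eventually_const_lt hab
  have E5 : ∀ᶠ n in Filter.atTop, an n < b := ha.eventually_lt_const hab
  have E6 : ∀ᶠ n in Filter.atTop,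
      (⨆ s : ↥(Set.Icc a b ∩ Set.Icc (an n) (bn n)), |φ (s : ℝ) - φn n (s : ℝ)|) < ε / 2 :=
    hconv.eventually_lt_const (by positivity)
  filter_upwards [E1, E1b, E2, E3, E4, E5, E6] with n h1 h1b h2 h3 h4 h5 h6
  set c : ℕ → ℝ := fun i => max (an n) (min (bn n) (s i)) with hc
  have habn := hab_n n
  have hc_n : ∀ i, c i ∈ Set.Icc (an n) (bn n) := fun i =>
    ⟨le_max_left _ _, max_le habn.le (min_le_left _ _)⟩
  have hc_ab : ∀ i, i ≤ k → c i ∈ Set.Icc a b := by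
    intro i hi
    constructor
    · exact (le_min h4.le (hmem i hi).1).trans (le_max_right _ _)
    · exact max_le h5.le ((min_le_right _ _).trans (hmem i hi).2)
  have hc_close : ∀ i, i ≤ k → |c i - s i| < δ := by
    intro i hi
    have hai : a ≤ s i := (hmem i hi).1
    have hbi : s i ≤ b := (hmem i hi).2
    have h1' := abs_sub_lt_iff.mp h1
    have h1b' := abs_sub_lt_iff.mp h1b
    rcases le_total (s i) (bn n) with hsb | hsb
    · rcases le_total (an n) (s i) with has | has
      · have hci : c i = s i := by
          rw [hc]; simp only
          rw [min_eq_right hsb, max_eq_right has]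
        simpa [hci] using hδ
      · have hci : c i = an n := by
          rw [hc]; simp only
          rw [min_eq_right hsb, max_eq_left has]
        rw [hci, abs_sub_lt_iff]
        constructor <;> linarith [h1'.1]
    · have hci : c i = bn n := by
        rw [hc]; simp only
        rw [min_eq_left hsb, max_eq_right habn.le]
      rw [hci, abs_sub_lt_iff]
      constructor <;> linarith [h1b'.2]
  have hsup_bdd : BddAbove (Set.range fun t : ↥(Set.Icc a b ∩ Set.Icc (an n) (bn n)) =>
      |φ (t : ℝ) - φn n (t : ℝ)|) := by
    have hK : IsCompact (Set.Icc a b ∩ Set.Icc (an n) (bn n)) :=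
      isCompact_Icc.inter_right isClosed_Icc
    have hcont : ContinuousOn (fun t => |φ t - φn n t|)
        (Set.Icc a b ∩ Set.Icc (an n) (bn n)) :=
      ((hφ_cont.mono Set.inter_subset_left).sub
        ((hφn_cont n).mono Set.inter_subset_right)).abs
    have := hK.bddAbove_image hcont
    rwa [← Set.range_restrict] at this
  have hsign' : ∀ i, i ≤ k → 0 < φ (s i) * φn n (c i) := by
    intro i hi
    have hciX : c i ∈ Set.Icc a b ∩ Set.Icc (an n) (bn n) := ⟨hc_ab i hi, hc_n i⟩
    have h6' : |φ (c i) - φn n (c i)| < ε / 2 :=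
      lt_of_le_of_lt (le_ciSup hsup_bdd ⟨c i, hciX⟩) h6
    have hφc : |φ (c i) - φ (s i)| < ε / 2 := by
      have := hδ' (c i) (hc_ab i hi) (s i) (hmem i hi)
        (by rw [Real.dist_eq]; exact hc_close i hi)
      rwa [Real.dist_eq] at this
    have htri : |φn n (c i) - φ (s i)| < ε := by
      calc |φn n (c i) - φ (s i)|
          ≤ |φn n (c i) - φ (c i)| + |φ (c i) - φ (s i)| := abs_sub_le _ _ _
        _ < ε / 2 + ε / 2 := by
            rw [abs_sub_comm]
            exact add_lt_add h6' hφc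
        _ = ε := by ring
    exact sign_aux (lt_of_lt_of_le htri (hεle i hi))
  have hcmono : ∀ i, i < k → c i < c (i + 1) := by
    intro i hik
    have h1k : an n < s (i + 1) := lt_of_lt_of_le h2 (smono (i + 1) (by omega) 1 (by omega))
    have hc1 : c (i + 1) = min (bn n) (s (i + 1)) := by
      rw [hc]; simp only
      exact max_eq_right (le_min habn.le h1k.le)
    rw [hc1]
    apply max_lt
    · exact lt_min habn h1k
    · apply lt_min
      · calc min (bn n) (s i) ≤ s i := min_le_right _ _
          _ ≤ s (k - 1) := smono (k - 1) (by omega) i (by omega)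
          _ < bn n := h3
      · exact lt_of_le_of_lt (min_le_right _ _) (sstrict i (i + 1) (by omega) (by omega))
  have hsgn2 : ∀ i, 1 ≤ i → i ≤ k → φn n (c (i - 1)) * φn n (c i) < 0 := by
    intro i h1i hik
    have A := hsign' (i - 1) (by omega)
    have B := hsign' i hik
    have C := hsign i h1i hik
    nlinarith [mul_pos A B]
  have hkmem : k ∈ scSet (φn n) (an n) (bn n) :=
    ⟨hk1, c, fun i _ => hc_n i, hcmono, hsgn2⟩
  have h01 : φn n (c 0) * φn n (c 1) < 0 := by
    have := hsgn2 1 le_rfl hk1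
    norm_num at this
    exact this
  have hnotone : ¬((∀ t ∈ Set.Icc (an n) (bn n), 0 ≤ φn n t) ∨
      (∀ t ∈ Set.Icc (an n) (bn n), φn n t ≤ 0)) := by
    rintro (h | h)
    · nlinarith [h (c 0) (hc_n 0), h (c 1) (hc_n 1)]
    · nlinarith [h (c 0) (hc_n 0), h (c 1) (hc_n 1)]
  unfold sc
  rw [if_neg hnotone]
  exact le_sSup ⟨k, hkmem, rfl⟩

lemma V_ne_even (φ : ℝ → ℝ) (a b : ℝ) {n : ℕ} (hn : Even n) : V φ a b ≠ (n : ℕ∞) := by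
  unfold V
  split_ifs with h
  · obtain ⟨m, hm, hme⟩ := h
    rw [hm]
    intro hcon
    have h1 : ((m + 1 : ℕ) : ℕ∞) = (n : ℕ∞) := by push_cast; exact hcon
    have h2 : m + 1 = n := by exact_mod_cast h1
    obtain ⟨r, hr⟩ := hme
    obtain ⟨q, hq⟩ := hn
    omega
  · intro hcon; exact h ⟨n, hcon, hn⟩

lemma sc_le_V (φ : ℝ → ℝ) (a b : ℝ) : sc φ a b ≤ V φ a b := by
  unfold V
  split_ifs
  · exact le_self_add
  · exact le_rfl

lemma one_le_V (φ : ℝ → ℝ) (a b : ℝ) : 1 ≤ V φ a b := by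
  have h := V_ne_even φ a b (Even.zero)
  rw [Nat.cast_zero] at h
  exact ENat.one_le_iff_ne_zero.mpr h

lemma sc_attained {φ : ℝ → ℝ} {a b : ℝ} {m : ℕ} (hm : sc φ a b = (m : ℕ∞)) (hm0 : m ≠ 0) :
    m ∈ scSet φ a b := by
  unfold sc at hm
  split_ifs at hm with h
  · exfalso
    have : (0 : ℕ) = m := by exact_mod_cast hm
    omega
  · by_contra hmem
    have hub : ∀ x ∈ (fun n : ℕ => (n : ℕ∞)) '' scSet φ a b, x ≤ ((m - 1 : ℕ) : ℕ∞) := by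
      rintro x ⟨j, hj, rfl⟩
      have hle : (j : ℕ∞) ≤ (m : ℕ∞) := hm ▸ le_sSup ⟨j, hj, rfl⟩
      have hjm : j ≤ m := by exact_mod_cast hle
      have hjne : j ≠ m := fun hjeq => hmem (hjeq ▸ hj)
      exact_mod_cast Nat.cast_le.mpr (by omega : j ≤ m - 1)
    have hs := sSup_le hub
    rw [hm] at hs
    have : m ≤ m - 1 := by exact_mod_cast hs
    omega

/-- Lower semicontinuity of the discrete Lyapunov function `V`: if `φⁿ → φ` uniformly
on the intersections of the domains and `aⁿ → a`, `bⁿ → b`, then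
`V(φ,[a,b]) ≤ liminf V(φⁿ,[aⁿ,bⁿ])`. -/
theorem V_lower_semicontinuous
    (a b : ℝ) (φ : ℝ → ℝ)
    (hφ_cont : ContinuousOn φ (Set.Icc a b))
    (hφ_ne : ∃ s ∈ Set.Icc a b, φ s ≠ 0)
    (an bn : ℕ → ℝ) (φn : ℕ → ℝ → ℝ)
    (hab_n : ∀ n, an n < bn n)
    (hφn_cont : ∀ n, ContinuousOn (φn n) (Set.Icc (an n) (bn n)))
    (hφn_ne : ∀ n, ∃ s ∈ Set.Icc (an n) (bn n), φn n s ≠ 0)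
    (hconv : Filter.Tendsto
      (fun n => ⨆ s : ↥(Set.Icc a b ∩ Set.Icc (an n) (bn n)), |φ (s : ℝ) - φn n (s : ℝ)|)
      Filter.atTop (nhds 0))
    (ha : Filter.Tendsto an Filter.atTop (nhds a))
    (hb : Filter.Tendsto bn Filter.atTop (nhds b)) :
    V φ a b ≤ Filter.liminf (fun n => V (φn n) (an n) (bn n)) Filter.atTop := by

  have hlim : ∀ x : ℕ∞, (∀ᶠ n in Filter.atTop, x ≤ V (φn n) (an n) (bn n)) →
      x ≤ Filter.liminf (fun n => V (φn n) (an n) (bn n)) Filter.atTop := by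
    intro x hx
    calc x = Filter.liminf (fun _ : ℕ => x) Filter.atTop := (Filter.liminf_const x).symm
      _ ≤ _ := Filter.liminf_le_liminf hx
  have hC : ∀ j ∈ scSet φ a b,
      (j : ℕ∞) ≤ Filter.liminf (fun n => V (φn n) (an n) (bn n)) Filter.atTop := by
    intro j hj
    exact hlim _ ((key_lemma a b φ hφ_cont an bn φn hab_n hφn_cont hconv ha hb j hj).mono
      (fun n h => h.trans (sc_le_V _ _ _)))
  have h1L : (1 : ℕ∞) ≤ Filter.liminf (fun n => V (φn n) (an n) (bn n)) Filter.atTop :=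
    hlim 1 (Filter.Eventually.of_forall fun n => one_le_V _ _ _)
  have hscL : sc φ a b ≤ Filter.liminf (fun n => V (φn n) (an n) (bn n)) Filter.atTop := by
    unfold sc
    split_ifs with h
    · exact zero_le
    · exact sSup_le (by rintro x ⟨j, hj, rfl⟩; exact hC j hj)
  unfold V
  split_ifs with h
  · obtain ⟨m, hm, hme⟩ := h
    rw [hm]
    rcases Nat.eq_zero_or_pos m with rfl | hm0
    · rw [Nat.cast_zero, zero_add]; exact h1L
    · have hmem := sc_attained hm (by omega)
      apply hlim
      refine (key_lemma a b φ hφ_cont an bn φn hab_n hφn_cont hconv ha hb m hmem).mono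
        (fun n hn => ?_)
      have hle : (m : ℕ∞) ≤ V (φn n) (an n) (bn n) := hn.trans (sc_le_V _ _ _)
      have hne := V_ne_even (φn n) (an n) (bn n) hme
      exact (ENat.add_one_le_iff (by simp)).mpr (lt_of_le_of_ne hle (Ne.symm hne))
  · exact hscL
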